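/- Let C_k be a sequence of column-stochastic matrices whose support graphs have β-strongly-connected unions and positive diagonal entries, with all positive entries bounded below by some δ > 0 (e.g., δ = 1/n for the weights c = 1/(1+d^out)). Then the backward products C_{k+T−1}⋯C_{k+1}C_k are entrywise positive for T = (n−1)β, i.e., every such product matrix has all entries strictly positive. -/
import Mathlib


/-- Backward products of (n−1)β consecutive column-stochastic matrices with
positive diagonals (≥ δ), edge weights ≥ δ, and β-strongly-connected unions of
support graphs are entrywise positive (entries ≥ δ^((n−1)β)). -/
theorem backward_product_positive (n β : ℕ) (hn : 1 ≤ n) (hβ : 1 ≤ β)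
    (C : ℕ → Matrix (Fin n) (Fin n) ℝ)
    (E : ℕ → Fin n → Fin n → Prop)    -- E k j l : edge j → l present at time k
    (δ : ℝ) (hδ : 0 < δ)
    (hnonneg : ∀ k i j, 0 ≤ C k i j)
    (hcol : ∀ k j, ∑ i, C k i j = 1)
    (hdiag : ∀ k j, δ ≤ C k j j)
    (hedge : ∀ k j l, E k j l → δ ≤ C k l j)
    (hconn : ∀ t : ℕ, ∀ u v : Fin n, ∃ m : ℕ, ∃ p : ℕ → Fin n, p 0 = u ∧ p m = v ∧
      ∀ i < m, ∃ s, t ≤ s ∧ s < t + β ∧ E s (p i) (p (i + 1))) :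
    ∀ k : ℕ, ∀ P : ℕ → Matrix (Fin n) (Fin n) ℝ,
      P 0 = 1 → (∀ m, P (m + 1) = C (k + m) * P m) →
      ∀ l j : Fin n, δ ^ ((n - 1) * β) ≤ P ((n - 1) * β) l j := by
  intro k P hP0 hPs l j
  classical
  -- nonnegativity of P
  have hPnn : ∀ m i a, 0 ≤ P m i a := by
    intro m
    induction m with
    | zero =>
        intro i a
        rw [hP0]
        by_cases h : i = a <;> simp [Matrix.one_apply, h]
    | succ m ih =>
        intro i a
        rw [hPs, Matrix.mul_apply]
        exact Finset.sum_nonneg fun b _ => mul_nonneg (hnonneg _ _ _) (ih _ _)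
  -- the growing set of "reached" indices
  set S : ℕ → Finset (Fin n) := fun t => Finset.univ.filter (fun i => δ ^ t ≤ P t i j)
    with hS
  have hmemS : ∀ t a, a ∈ S t ↔ δ ^ t ≤ P t a j := by
    intro t a; simp [hS]
  have hstep : ∀ t a b, δ ≤ C (k + t) b a → a ∈ S t → b ∈ S (t + 1) := by
    intro t a b hC ha
    rw [hmemS] at ha ⊢
    have h1 : δ ^ (t + 1) ≤ C (k + t) b a * P t a j := by
      have := mul_le_mul hC ha (pow_nonneg hδ.le t) (hnonneg _ _ _)
      calc δ ^ (t + 1) = δ * δ ^ t := by ring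
        _ ≤ _ := this
    refine h1.trans ?_
    rw [hPs, Matrix.mul_apply]
    exact Finset.single_le_sum
      (f := fun i => C (k + t) b i * P t i j)
      (fun i _ => mul_nonneg (hnonneg _ _ _) (hPnn _ _ _))
      (Finset.mem_univ a)
  have hmono : ∀ t, S t ⊆ S (t + 1) := fun t a ha => hstep t a a (hdiag _ _) ha
  have hmono' : ∀ t t', t ≤ t' → S t ⊆ S t' := by
    intro t t' h
    induction t', h using Nat.le_induction with
    | base => exact Finset.Subset.refl _
    | succ t' h ih => exact ih.trans (hmono t')
  have hj0 : j ∈ S 0 := by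
    rw [hmemS, hP0]
    simp [Matrix.one_apply]
  -- growth over a window of length β
  have hgrow : ∀ t, S t ≠ Finset.univ → (S t).card + 1 ≤ (S (t + β)).card := by
    intro t hne
    obtain ⟨v, hv⟩ : ∃ v, v ∉ S t := by
      by_contra h
      push_neg at h
      exact hne (Finset.eq_univ_of_forall h)
    obtain ⟨m, p, hp0, hpm, hpe⟩ := hconn (k + t) j v
    have hcross : ∃ i < m, p i ∈ S t ∧ p (i + 1) ∉ S t := by
      by_contra h
      push_neg at h
      have hall : ∀ i ≤ m, p i ∈ S t := by
        intro i hi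
        induction i with
        | zero => rw [hp0]; exact hmono' 0 t (Nat.zero_le t) hj0
        | succ i ih =>
            by_contra hc
            exact hc ((h i (by omega) (ih (by omega))))
      exact hv (hpm ▸ hall m le_rfl)
    obtain ⟨i, him, hpi, hpi1⟩ := hcross
    obtain ⟨s, hs1, hs2, he⟩ := hpe i him
    -- write s = k + r with t ≤ r < t + β
    obtain ⟨r, hr⟩ : ∃ r, s = k + r := ⟨s - k, by omega⟩
    have hrt : t ≤ r := by omega
    have hrb : r + 1 ≤ t + β := by omega
    have hb : p (i + 1) ∈ S (t + β) := by
      refine hmono' (r + 1) (t + β) hrb ?_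
      exact hstep r (p i) (p (i + 1)) (hr ▸ hedge s _ _ he) (hmono' t r hrt hpi)
    have hsub : insert (p (i + 1)) (S t) ⊆ S (t + β) := by
      intro x hx
      rcases Finset.mem_insert.mp hx with h | h
      · exact h ▸ hb
      · exact hmono' t (t + β) (by omega) h
    have := Finset.card_le_card hsub
    rwa [Finset.card_insert_of_notMem hpi1] at this
  -- cardinality after c windows
  have hcard : ∀ c, min n (c + 1) ≤ (S (c * β)).card := by
    intro c
    induction c with
    | zero =>
        have : 1 ≤ (S 0).card := Finset.card_pos.mpr ⟨j, hj0⟩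
        simpa using le_trans (min_le_right n 1) this
    | succ c ih =>
        have hrw : (c + 1) * β = c * β + β := by ring
        by_cases h : S (c * β) = Finset.univ
        · have : S ((c + 1) * β) = Finset.univ :=
            Finset.eq_univ_of_forall fun x =>
              hmono' (c * β) ((c + 1) * β) (by nlinarith) (h ▸ Finset.mem_univ x)
          rw [this, Finset.card_univ, Fintype.card_fin]
          omega
        · have h1 := hgrow (c * β) h
          rw [← hrw] at h1
          have h2 : (S (c * β)).card ≤ n := by
            have := Finset.card_le_card (Finset.subset_univ (S (c * β)))
            simpa using this
          omega
  have hfin := hcard (n - 1)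
  have hTn : min n (n - 1 + 1) = n := by omega
  rw [hTn] at hfin
  have huniv : S ((n - 1) * β) = Finset.univ := by
    apply Finset.eq_univ_of_card
    have h2 : (S ((n - 1) * β)).card ≤ n := by
      have := Finset.card_le_card (Finset.subset_univ (S ((n - 1) * β)))
      simpa using this
    simp only [Fintype.card_fin]
    omega
  have : l ∈ S ((n - 1) * β) := huniv ▸ Finset.mem_univ l
  exact (hmemS _ _).mp this
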